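/- The matrix identity [CT_1(e_{++})] · [CT_1(o_{++})] = (1-q^{-2})^4 · Id₃ holds, where [CT_1(e_{++})] = (1-q^{-2})² · [[-q, 1, 0], [0, q^{-1}, 0], [0, 1, -q]] and [CT_1(o_{++})] is determined by this relation; i.e., the weight-1 matrix of the positive crossing is invertible over C(q) with inverse (1-q^{-2})^{-4} times the weight-1 matrix of the negative crossing. -/

import Mathlib

set_option synthInstance.maxHeartbeats 1000000
set_option maxHeartbeats 1000000

noncomputable section

abbrev Rq : Type := RatFunc ℂ
abbrev qq : Rq := RatFunc.X

lemma qq_ne_zero : qq ≠ 0 := RatFunc.X_ne_zero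

lemma c_ne_zero : (1 - qq ^ (-2 : ℤ)) ≠ 0 := by
  have hq : qq ≠ 0 := qq_ne_zero
  rw [zpow_neg, sub_ne_zero]
  intro h
  have h2 : qq ^ (2 : ℤ) = 1 := by
    have := congrArg (· * qq ^ (2 : ℤ)) h
    exact inv_eq_one.mp h.symm
  have h3 : (RatFunc.X : Rq) ^ (2 : ℕ) = 1 := by
    rw [← zpow_natCast]; exact_mod_cast h2
  have h4 : (Polynomial.X ^ 2 : Polynomial ℂ) = 1 := by
    apply RatFunc.algebraMap_injective ℂ
    simpa [map_pow] using h3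
  have := congrArg Polynomial.natDegree h4
  simp at this

lemma AB_eq_one :
    !![-qq, 1, 0; 0, qq⁻¹, 0; 0, 1, -qq] *
      !![-qq⁻¹, 1, 0; 0, qq, 0; 0, 1, -qq⁻¹] = (1 : Matrix (Fin 3) (Fin 3) Rq) := by
  have hq : qq ≠ 0 := qq_ne_zero
  ext i j
  fin_cases i <;> fin_cases j <;>
    simp [Matrix.mul_apply, Fin.sum_univ_succ, mul_inv_cancel₀ hq, inv_mul_cancel₀ hq]

lemma BA_eq_one :
    !![-qq⁻¹, 1, 0; 0, qq, 0; 0, 1, -qq⁻¹] *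
      !![-qq, 1, 0; 0, qq⁻¹, 0; 0, 1, -qq] = (1 : Matrix (Fin 3) (Fin 3) Rq) := by
  have hq : qq ≠ 0 := qq_ne_zero
  ext i j
  fin_cases i <;> fin_cases j <;>
    simp [Matrix.mul_apply, Fin.sum_univ_succ, mul_inv_cancel₀ hq, inv_mul_cancel₀ hq]

/-- The weight-1 matrix of the positive crossing bimodule,
`[CT₁(e₊₊)] = (1-q⁻²)² · [[-q, 1, 0], [0, q⁻¹, 0], [0, 1, -q]]`, is invertible over
`ℂ(q)`, and there is a matrix `[CT₁(o₊₊)]` with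
`[CT₁(e₊₊)] · [CT₁(o₊₊)] = (1-q⁻²)⁴ · Id₃ = [CT₁(o₊₊)] · [CT₁(e₊₊)]`; i.e. the
inverse of `[CT₁(e₊₊)]` is `(1-q⁻²)^{-4}` times the weight-1 matrix of the negative
crossing. -/
theorem stmt19 :
    let c : Rq := 1 - qq ^ (-2 : ℤ)
    let Me : Matrix (Fin 3) (Fin 3) Rq :=
      c ^ 2 • !![-qq, 1, 0; 0, qq⁻¹, 0; 0, 1, -qq]
    IsUnit Me ∧
    ∃ Mo : Matrix (Fin 3) (Fin 3) Rq,
      Me * Mo = c ^ 4 • (1 : Matrix (Fin 3) (Fin 3) Rq) ∧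
      Mo * Me = c ^ 4 • (1 : Matrix (Fin 3) (Fin 3) Rq) := by
  intro c Me
  have hc : c ≠ 0 := by unfold c; exact c_ne_zero
  set A : Matrix (Fin 3) (Fin 3) Rq := !![-qq, 1, 0; 0, qq⁻¹, 0; 0, 1, -qq] with hA
  set B : Matrix (Fin 3) (Fin 3) Rq := !![-qq⁻¹, 1, 0; 0, qq, 0; 0, 1, -qq⁻¹] with hB
  have hMo : Me * (c ^ 2 • B) = c ^ 4 • (1 : Matrix (Fin 3) (Fin 3) Rq) := by
    show (c ^ 2 • A) * (c ^ 2 • B) = _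
    rw [Matrix.smul_mul, Matrix.mul_smul, AB_eq_one, smul_smul]
    ring_nf
  have hMo' : (c ^ 2 • B) * Me = c ^ 4 • (1 : Matrix (Fin 3) (Fin 3) Rq) := by
    show (c ^ 2 • B) * (c ^ 2 • A) = _
    rw [Matrix.smul_mul, Matrix.mul_smul, BA_eq_one, smul_smul]
    ring_nf
  refine ⟨?_, c ^ 2 • B, hMo, hMo'⟩
  rw [Matrix.isUnit_iff_isUnit_det]
  have hdetA : A.det = qq := by
    rw [hA, Matrix.det_fin_three]
    simp
  have hdet : Me.det = (c ^ 2) ^ 3 * qq := by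
    show ((c ^ 2) • A).det = _
    rw [Matrix.det_smul, hdetA]
    norm_num
  rw [hdet]
  exact (isUnit_iff_ne_zero.mpr (mul_ne_zero (pow_ne_zero 3 (pow_ne_zero 2 hc)) qq_ne_zero))

end
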